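/- Mixed-domain interface trace bound: let l > 0, let w : [-l,0] → ℝ be continuously differentiable on [-l,0], and let v : [0,1] → ℝ be continuously differentiable on [0,1]. Then |w(0)·v(0)| ≤ √(6/l + 3) · ‖w‖_{H¹(-l,0)} · ‖v‖_{H¹(0,1)}. -/

import Mathlib

open Set MeasureTheory intervalIntegral

lemma trace_aux (a b : ℝ) (hab : a < b) (u u' : ℝ → ℝ)
    (hu : ∀ x ∈ Set.Icc a b, HasDerivWithinAt u (u' x) (Set.Icc a b) x)
    (hu' : ContinuousOn u' (Set.Icc a b)) (c : ℝ) (hc : c = a ∨ c = b) :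
    (u c)^2 ≤ (1/(b-a) + 1) * ∫ x in a..b, (u x ^2 + u' x ^2) := by
  set I := ∫ x in a..b, (u x ^2 + u' x ^2) with hI
  have hcont : ContinuousOn u (Icc a b) := fun x hx => (hu x hx).continuousWithinAt
  have hsum : ContinuousOn (fun x => u x ^2 + u' x ^2) (Icc a b) :=
    (hcont.pow 2).add (hu'.pow 2)
  have hsum_int : IntervalIntegrable (fun x => u x ^2 + u' x ^2) volume a b :=
    hsum.intervalIntegrable_of_Icc hab.le
  have hprod : ContinuousOn (fun x => 2 * u x * u' x) (Icc a b) :=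
    (continuousOn_const.mul hcont).mul hu'
  have hInonneg : 0 ≤ I := intervalIntegral.integral_nonneg hab.le (fun x _ => by positivity)
  have ftc : ∀ s ∈ Icc a b, ∀ t ∈ Icc a b, s ≤ t →
      ∫ x in s..t, (2 * u x * u' x) = u t ^2 - u s ^2 := by
    intro s hs t ht hst
    apply integral_eq_sub_of_hasDeriv_right_of_le hst
    · exact (hcont.mono (Icc_subset_Icc hs.1 ht.2)).pow 2
    · intro x hx
      have hx' : x ∈ Icc a b := ⟨hs.1.trans hx.1.le, hx.2.le.trans ht.2⟩
      have hnhds : Icc a b ∈ nhds x :=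
        Icc_mem_nhds (lt_of_le_of_lt hs.1 hx.1) (lt_of_lt_of_le hx.2 ht.2)
      have h := (((hu x hx').hasDerivAt hnhds).fun_pow 2).hasDerivWithinAt (s := Ioi x)
      simpa [pow_one] using h
    · exact (hprod.mono (Icc_subset_Icc hs.1 ht.2)).intervalIntegrable_of_Icc hst
  have key : ∀ x ∈ Icc a b, u c ^2 ≤ u x ^2 + I := by
    intro x hx
    rcases hc with rfl | rfl
    · -- left endpoint
      have heq := ftc c (left_mem_Icc.mpr hab.le) x hx hx.1
      have h1 : ∫ y in c..x, (-(2 * u y * u' y)) ≤ ∫ y in c..x, (u y ^2 + u' y ^2) := by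
        apply intervalIntegral.integral_mono_on hx.1
        · exact ((hprod.mono (Icc_subset_Icc le_rfl hx.2)).neg).intervalIntegrable_of_Icc hx.1
        · exact (hsum.mono (Icc_subset_Icc le_rfl hx.2)).intervalIntegrable_of_Icc hx.1
        · intro y _; nlinarith [sq_nonneg (u y + u' y)]
      have h2 : ∫ y in c..x, (u y ^2 + u' y ^2) ≤ I := by
        apply intervalIntegral.integral_mono_interval le_rfl hx.1 hx.2
        · exact Filter.Eventually.of_forall (fun y => by positivity)
        · exact hsum_int
      rw [intervalIntegral.integral_neg] at h1
      linarith
    · -- right endpoint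
      have heq := ftc x hx c (right_mem_Icc.mpr hab.le) hx.2
      have h1 : ∫ y in x..c, (2 * u y * u' y) ≤ ∫ y in x..c, (u y ^2 + u' y ^2) := by
        apply intervalIntegral.integral_mono_on hx.2
        · exact (hprod.mono (Icc_subset_Icc hx.1 le_rfl)).intervalIntegrable_of_Icc hx.2
        · exact (hsum.mono (Icc_subset_Icc hx.1 le_rfl)).intervalIntegrable_of_Icc hx.2
        · intro y _; nlinarith [sq_nonneg (u y - u' y)]
      have h2 : ∫ y in x..c, (u y ^2 + u' y ^2) ≤ I := by
        apply intervalIntegral.integral_mono_interval hx.1 hx.2 le_rfl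
        · exact Filter.Eventually.of_forall (fun y => by positivity)
        · exact hsum_int
      linarith
  -- integrate the pointwise bound over [a,b]
  have hu2_int : IntervalIntegrable (fun x => u x ^2) volume a b :=
    (hcont.pow 2).intervalIntegrable_of_Icc hab.le
  have hint : ∫ x in a..b, (u c ^2) ≤ ∫ x in a..b, (u x ^2 + I) := by
    apply intervalIntegral.integral_mono_on hab.le intervalIntegrable_const
      (hu2_int.add intervalIntegrable_const) key
  have hL : ∫ x in a..b, (u c ^2) = (b - a) * u c ^2 := by
    simp [intervalIntegral.integral_const, smul_eq_mul]
  have hR : ∫ x in a..b, (u x ^2 + I) = (∫ x in a..b, u x ^2) + (b - a) * I := by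
    rw [intervalIntegral.integral_add hu2_int intervalIntegrable_const]
    simp [intervalIntegral.integral_const, smul_eq_mul]
  have hsub : ∫ x in a..b, u x ^2 ≤ I := by
    apply intervalIntegral.integral_mono_on hab.le hu2_int hsum_int
    intro x _; nlinarith [sq_nonneg (u' x)]
  have hba : 0 < b - a := by linarith
  have hmain : (b - a) * u c ^2 ≤ I + (b - a) * I := by
    rw [hL, hR] at hint; linarith
  have hinv : (1/(b-a)) * (b - a) = 1 := by field_simp
  nlinarith [mul_le_mul_of_nonneg_left hmain (le_of_lt (by positivity : (0:ℝ) < 1/(b-a)))]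

/-- Mixed-domain interface trace bound: for `l > 0`, `w` continuously differentiable on
`[-l,0]` and `v` continuously differentiable on `[0,1]`,
`|w(0)·v(0)| ≤ √(6/l + 3) · ‖w‖_{H¹(-l,0)} · ‖v‖_{H¹(0,1)}`. -/
theorem mixed_domain_interface_trace_bound
    (l : ℝ) (hl : 0 < l) (w w' v v' : ℝ → ℝ)
    (hw : ∀ x ∈ Set.Icc (-l) 0, HasDerivWithinAt w (w' x) (Set.Icc (-l) 0) x)
    (hw' : ContinuousOn w' (Set.Icc (-l) 0))
    (hv : ∀ x ∈ Set.Icc (0 : ℝ) 1, HasDerivWithinAt v (v' x) (Set.Icc (0 : ℝ) 1) x)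
    (hv' : ContinuousOn v' (Set.Icc (0 : ℝ) 1)) :
    |w 0 * v 0| ≤ Real.sqrt (6 / l + 3) *
      Real.sqrt (∫ x in (-l)..0, ((w x) ^ 2 + (w' x) ^ 2)) *
      Real.sqrt (∫ x in (0 : ℝ)..1, ((v x) ^ 2 + (v' x) ^ 2)) := by
  set Iw := ∫ x in (-l)..0, ((w x) ^ 2 + (w' x) ^ 2) with hIw
  set Iv := ∫ x in (0:ℝ)..1, ((v x) ^ 2 + (v' x) ^ 2) with hIv
  have hIwn : 0 ≤ Iw := intervalIntegral.integral_nonneg (by linarith) (fun x _ => by positivity)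
  have hIvn : 0 ≤ Iv := intervalIntegral.integral_nonneg (by norm_num) (fun x _ => by positivity)
  have hw0 : (w 0)^2 ≤ (1/l + 1) * Iw := by
    have := trace_aux (-l) 0 (by linarith) w w' hw hw' 0 (Or.inr rfl)
    simpa using this
  have hv0 : (v 0)^2 ≤ 2 * Iv := by
    have := trace_aux 0 1 (by norm_num) v v' hv hv' 0 (Or.inl rfl)
    norm_num at this
    linarith
  have habs : |w 0 * v 0| = Real.sqrt ((w 0)^2 * (v 0)^2) := by
    rw [← mul_pow, Real.sqrt_sq_eq_abs]
  rw [habs]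
  have hstep : (w 0)^2 * (v 0)^2 ≤ (6/l + 3) * (Iw * Iv) := by
    have h1 : (w 0)^2 * (v 0)^2 ≤ ((1/l + 1) * Iw) * (2 * Iv) := by
      apply mul_le_mul hw0 hv0 (sq_nonneg _)
      positivity
    have h2 : ((1/l + 1) * Iw) * (2 * Iv) ≤ (6/l + 3) * (Iw * Iv) := by
      have hll : 0 < 1/l := by positivity
      have hP : 0 ≤ Iw * Iv := mul_nonneg hIwn hIvn
      have e1 : (1/l + 1) * Iw * (2 * Iv) = (2 * (1/l) + 2) * (Iw * Iv) := by ring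
      have e2 : (6/l + 3) * (Iw * Iv) = (6 * (1/l) + 3) * (Iw * Iv) := by ring
      nlinarith [mul_nonneg hll.le hP, hP]
    linarith
  calc Real.sqrt ((w 0)^2 * (v 0)^2) ≤ Real.sqrt ((6/l + 3) * (Iw * Iv)) :=
        Real.sqrt_le_sqrt hstep
    _ = Real.sqrt (6/l + 3) * Real.sqrt Iw * Real.sqrt Iv := by
        rw [Real.sqrt_mul (by positivity), Real.sqrt_mul hIwn, mul_assoc]
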